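/- For every real σ > 1 and every real t, the squared modulus of the Riemann zeta function satisfies |ζ(σ + it)|² = (ζ(4σ)/ζ(2σ)) · ∏_p (1 − (2/(p^σ + p^{−σ})) cos(t log p))^{−1}, where the product runs over all prime numbers p and converges. -/

import Mathlib

open Real Complex

private lemma cpow_decomp (σ t : ℝ) (p : Nat.Primes) :
    ((p : ℕ) : ℂ) ^ (-((σ:ℂ) + (t:ℂ) * I)) =
      ((((p:ℕ):ℝ) ^ (-σ) : ℝ) : ℂ) * Complex.exp ((-(t * Real.log (p:ℕ)) : ℝ) * I) := by
  have hp : (0:ℝ) < ((p:ℕ):ℝ) := by exact_mod_cast p.2.pos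
  have hne : ((p:ℕ):ℂ) ≠ 0 := by exact_mod_cast hp.ne'
  rw [Complex.cpow_def_of_ne_zero hne]
  have hlog : Complex.log ((p:ℕ):ℂ) = (Real.log ((p:ℕ):ℝ) : ℂ) := by
    rw [show ((p:ℕ):ℂ) = (((p:ℕ):ℝ):ℂ) from by push_cast; ring, Complex.ofReal_log hp.le]
  rw [hlog, Real.rpow_def_of_pos hp]
  rw [show (Real.log ((p:ℕ):ℝ) : ℂ) * (-((σ:ℂ) + (t:ℂ) * I))
      = ((Real.log ((p:ℕ):ℝ) * -σ : ℝ) : ℂ) + ((-(t * Real.log ((p:ℕ):ℝ)) : ℝ) : ℂ) * I from by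
    push_cast; ring]
  rw [Complex.exp_add, Complex.ofReal_exp]

private lemma abs_sq_one_sub (a θ : ℝ) :
    ‖1 - (a : ℂ) * Complex.exp ((-θ : ℝ) * I)‖ ^ 2
      = 1 - 2 * a * Real.cos θ + a ^ 2 := by
  rw [Complex.sq_norm, Complex.normSq_apply]
  simp only [Complex.sub_re, Complex.sub_im, Complex.one_re, Complex.one_im,
    Complex.mul_re, Complex.mul_im, Complex.ofReal_re, Complex.ofReal_im,
    Complex.exp_ofReal_mul_I_re, Complex.exp_ofReal_mul_I_im, Real.cos_neg, Real.sin_neg]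
  nlinarith [Real.sin_sq_add_cos_sq θ]

private lemma real_euler (r : ℝ) (hr : 1 < r) :
    HasProd (fun p : Nat.Primes => (1 - ((p:ℕ):ℝ) ^ (-r))⁻¹)
      ‖riemannZeta ((r:ℝ) : ℂ)‖ ∧
    riemannZeta ((r:ℝ) : ℂ) = ((‖riemannZeta ((r:ℝ) : ℂ)‖ : ℝ) : ℂ) := by
  have hs : 1 < ((r:ℝ) : ℂ).re := by simpa using hr
  have HP := riemannZeta_eulerProduct_hasProd hs
  have hfac : ∀ p : Nat.Primes, (1 - ((p:ℕ):ℂ) ^ (-(r:ℂ)))⁻¹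
      = ((((1 - ((p:ℕ):ℝ) ^ (-r))⁻¹ : ℝ)) : ℂ) := by
    intro p
    have hp : (0:ℝ) ≤ ((p:ℕ):ℝ) := by positivity
    rw [show ((p:ℕ):ℂ) = (((p:ℕ):ℝ):ℂ) from by push_cast; ring,
      show (-(r:ℂ)) = ((-r : ℝ) : ℂ) from by push_cast; ring,
      ← Complex.ofReal_cpow hp]
    push_cast [Real.rpow_natCast]
    norm_num
  have hpos : ∀ p : Nat.Primes, (0:ℝ) < 1 - ((p:ℕ):ℝ) ^ (-r) := by
    intro p
    have h2 : (2:ℝ) ≤ ((p:ℕ):ℝ) := by exact_mod_cast p.2.two_le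
    have : ((p:ℕ):ℝ) ^ (-r) < 1 :=
      Real.rpow_lt_one_of_one_lt_of_neg (by linarith) (by linarith)
    linarith
  rw [funext hfac] at HP
  have HPr : HasProd (fun p : Nat.Primes => (1 - ((p:ℕ):ℝ) ^ (-r))⁻¹)
      ‖riemannZeta ((r:ℝ) : ℂ)‖ := by
    have H2 := HP.map (normHom : ℂ →*₀ ℝ) continuous_norm
    rw [show (⇑(normHom : ℂ →*₀ ℝ) ∘ fun p : Nat.Primes => ((((1 - ((p:ℕ):ℝ) ^ (-r))⁻¹ : ℝ)) : ℂ))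
        = fun p : Nat.Primes => (1 - ((p:ℕ):ℝ) ^ (-r))⁻¹ from funext fun p => by
      simp only [Function.comp]
      rw [normHom_apply, Complex.norm_real, Real.norm_eq_abs, abs_of_pos (inv_pos.mpr (hpos p))]] at H2
    exact H2
  refine ⟨HPr, ?_⟩
  have H3 := HPr.map Complex.ofRealHom Complex.continuous_ofReal
  exact HP.unique H3

/-- For every real `σ > 1` and every real `t`,
`|ζ(σ + it)|² = (ζ(4σ)/ζ(2σ)) · ∏_p (1 − (2/(p^σ + p^{−σ})) cos(t log p))⁻¹`,
the product running over all primes `p` and converging. -/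
theorem zeta_abs_sq_eq_zeta_ratio_mul_prod (σ t : ℝ) (hσ : 1 < σ) :
    Multipliable (fun p : Nat.Primes =>
      (1 - (2 / (((p : ℕ) : ℝ) ^ σ + ((p : ℕ) : ℝ) ^ (-σ))) *
        Real.cos (t * Real.log (p : ℕ)))⁻¹) ∧
    ((‖riemannZeta ((σ : ℂ) + (t : ℂ) * Complex.I)‖ ^ 2 : ℝ) : ℂ) =
      riemannZeta ((4 * σ : ℝ) : ℂ) / riemannZeta ((2 * σ : ℝ) : ℂ) *
        ((∏' p : Nat.Primes,
          (1 - (2 / (((p : ℕ) : ℝ) ^ σ + ((p : ℕ) : ℝ) ^ (-σ))) *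
            Real.cos (t * Real.log (p : ℕ)))⁻¹ : ℝ) : ℂ) := by
  -- notation
  set a : Nat.Primes → ℝ := fun p => ((p:ℕ):ℝ) ^ (-σ) with ha_def
  set c : Nat.Primes → ℝ := fun p => Real.cos (t * Real.log ((p:ℕ):ℝ)) with hc_def
  have hp2 : ∀ p : Nat.Primes, (2:ℝ) ≤ ((p:ℕ):ℝ) := fun p => by exact_mod_cast p.2.two_le
  have ha0 : ∀ p : Nat.Primes, 0 < a p := fun p => by
    have := hp2 p; positivity
  have ha1 : ∀ p : Nat.Primes, a p < 1 := fun p =>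
    Real.rpow_lt_one_of_one_lt_of_neg (by linarith [hp2 p]) (by linarith)
  have hc1 : ∀ p : Nat.Primes, |c p| ≤ 1 := fun p => Real.abs_cos_le_one _
  have hFpos : ∀ p : Nat.Primes, 0 < 1 - 2 * a p * c p + (a p) ^ 2 := by
    intro p
    have h1 := ha0 p; have h2 := ha1 p
    have h3 : c p ≤ 1 := (abs_le.mp (hc1 p)).2
    have h4 : -1 ≤ c p := (abs_le.mp (hc1 p)).1
    nlinarith [sq_nonneg (1 - a p)]
  -- rpow rewrites
  have hA2 : ∀ p : Nat.Primes, ((p:ℕ):ℝ) ^ (-(2*σ)) = (a p) ^ 2 := by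
    intro p
    rw [ha_def]
    rw [show (-(2*σ)) = (-σ) * (2:ℕ) from by push_cast; ring,
      Real.rpow_mul (by positivity), Real.rpow_natCast]
  have hA4 : ∀ p : Nat.Primes, ((p:ℕ):ℝ) ^ (-(4*σ)) = ((a p) ^ 2) ^ 2 := by
    intro p
    rw [ha_def]
    rw [show (-(4*σ)) = (-σ) * (4:ℕ) from by push_cast; ring,
      Real.rpow_mul (by positivity), Real.rpow_natCast]
    ring
  -- the Euler product for |ζ(s)|²
  have hs : 1 < ((σ:ℂ) + (t:ℂ) * I).re := by simp [hσ]
  have HA := riemannZeta_eulerProduct_hasProd hs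
  have HAa := (HA.map (normHom : ℂ →*₀ ℝ) continuous_norm).mul
    (HA.map (normHom : ℂ →*₀ ℝ) continuous_norm)
  have HPF : HasProd (fun p : Nat.Primes => (1 - 2 * a p * c p + (a p) ^ 2)⁻¹)
      (‖riemannZeta ((σ:ℂ) + (t:ℂ) * I)‖ ^ 2) := by
    have hfun : (fun p : Nat.Primes =>
        (⇑(normHom : ℂ →*₀ ℝ) ∘ fun q : Nat.Primes => (1 - ((q:ℕ):ℂ) ^ (-((σ:ℂ) + (t:ℂ) * I)))⁻¹) p *
        (⇑(normHom : ℂ →*₀ ℝ) ∘ fun q : Nat.Primes => (1 - ((q:ℕ):ℂ) ^ (-((σ:ℂ) + (t:ℂ) * I)))⁻¹) p)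
        = fun p : Nat.Primes => (1 - 2 * a p * c p + (a p) ^ 2)⁻¹ := by
      funext p
      simp only [Function.comp, map_inv₀, normHom_apply]
      rw [← mul_inv, ← sq, cpow_decomp σ t p, abs_sq_one_sub (a p) (t * Real.log ((p:ℕ):ℝ))]
    rw [hfun] at HAa
    rwa [← sq] at HAa
  -- Euler products at 2σ and 4σ
  have HR2 := real_euler (2*σ) (by linarith)
  have HR4 := real_euler (4*σ) (by linarith)
  -- multipliability of ∏ (1 + a p ^ 2)
  have multG : Multipliable (fun p : Nat.Primes => 1 + (a p) ^ 2) := by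
    have hsum : Summable (fun p : Nat.Primes => Real.log (1 + (a p) ^ 2)) := by
      have hs2 : Summable (fun p : Nat.Primes => ((p:ℕ):ℝ) ^ (-(2*σ))) :=
        Nat.Primes.summable_rpow.mpr (by linarith)
      refine hs2.of_nonneg_of_le (fun p => Real.log_nonneg (by nlinarith [sq_nonneg (a p)]))
        (fun p => ?_)
      rw [hA2 p]
      have := Real.log_le_sub_one_of_pos
        (show (0:ℝ) < 1 + (a p)^2 from by positivity)
      linarith
    exact Real.multipliable_of_summable_log (fun p => by positivity) hsum
  -- factorwise identity for the target product
  have hHeq : ∀ p : Nat.Primes,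
      (1 - (2 / (((p:ℕ):ℝ) ^ σ + ((p:ℕ):ℝ) ^ (-σ))) * Real.cos (t * Real.log ((p:ℕ):ℝ)))⁻¹
        = (1 + (a p) ^ 2) * (1 - 2 * a p * c p + (a p) ^ 2)⁻¹ := by
    intro p
    have hps : ((p:ℕ):ℝ) ^ σ = (a p)⁻¹ := by
      rw [ha_def]; simp [Real.rpow_neg (by positivity : (0:ℝ) ≤ ((p:ℕ):ℝ))]
    rw [hps]
    have h1 := ha0 p
    have h2 : (0:ℝ) < 1 + (a p) ^ 2 := by positivity
    have h3 := hFpos p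
    have hsum : (0:ℝ) < (a p)⁻¹ + a p := by positivity
    have key : 1 - 2 / ((a p)⁻¹ + a p) * c p
        = (1 - 2 * a p * c p + (a p) ^ 2) / (1 + (a p) ^ 2) := by
      rw [eq_div_iff h2.ne']
      field_simp
      ring
    rw [show Real.cos (t * Real.log ((p:ℕ):ℝ)) = c p from rfl, key, inv_div,
      div_eq_mul_inv]
  have multH : Multipliable (fun p : Nat.Primes =>
      (1 - (2 / (((p:ℕ):ℝ) ^ σ + ((p:ℕ):ℝ) ^ (-σ))) * Real.cos (t * Real.log ((p:ℕ):ℝ)))⁻¹) := by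
    rw [funext hHeq]
    exact multG.mul HPF.multipliable
  constructor
  · exact multH
  -- combine the products
  have HL : HasProd (fun p : Nat.Primes =>
      (1 - ((p:ℕ):ℝ) ^ (-(2*σ)))⁻¹ * (1 - 2 * a p * c p + (a p) ^ 2)⁻¹)
      (‖riemannZeta (((2*σ:ℝ)) : ℂ)‖ *
        ‖riemannZeta ((σ:ℂ) + (t:ℂ) * I)‖ ^ 2) := HR2.1.mul HPF
  have HRt : HasProd (fun p : Nat.Primes =>
      (1 - ((p:ℕ):ℝ) ^ (-(4*σ)))⁻¹ *
        (1 - (2 / (((p:ℕ):ℝ) ^ σ + ((p:ℕ):ℝ) ^ (-σ))) * Real.cos (t * Real.log ((p:ℕ):ℝ)))⁻¹)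
      (‖riemannZeta (((4*σ:ℝ)) : ℂ)‖ *
        ∏' p : Nat.Primes,
          (1 - (2 / (((p:ℕ):ℝ) ^ σ + ((p:ℕ):ℝ) ^ (-σ))) *
            Real.cos (t * Real.log ((p:ℕ):ℝ)))⁻¹) := HR4.1.mul multH.hasProd
  have hfac2 : ∀ p : Nat.Primes,
      (1 - ((p:ℕ):ℝ) ^ (-(4*σ)))⁻¹ *
        (1 - (2 / (((p:ℕ):ℝ) ^ σ + ((p:ℕ):ℝ) ^ (-σ))) * Real.cos (t * Real.log ((p:ℕ):ℝ)))⁻¹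
      = (1 - ((p:ℕ):ℝ) ^ (-(2*σ)))⁻¹ * (1 - 2 * a p * c p + (a p) ^ 2)⁻¹ := by
    intro p
    rw [hHeq p, hA2 p, hA4 p]
    have h1 := ha0 p
    have h2 := ha1 p
    have hx1 : (a p) ^ 2 < 1 := by nlinarith
    have hne1 : 1 - (a p) ^ 2 ≠ 0 := by nlinarith
    have hne2 : 1 + (a p) ^ 2 ≠ 0 := by positivity
    have hne3 : 1 - ((a p) ^ 2) ^ 2 ≠ 0 := by nlinarith
    have hneD : 1 - 2 * a p * c p + (a p) ^ 2 ≠ 0 := (hFpos p).ne'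
    rw [show (1 - ((a p)^2)^2 : ℝ) = (1 - (a p)^2) * (1 + (a p)^2) from by ring, mul_inv]
    field_simp
  rw [funext hfac2] at HRt
  have key := HRt.unique HL
  -- final algebra
  have hz2 := HR2.2
  have hz4 := HR4.2
  have hz2ne : riemannZeta (((2*σ:ℝ)) : ℂ) ≠ 0 :=
    riemannZeta_ne_zero_of_one_lt_re (by simpa using (by linarith : (1:ℝ) < 2*σ))
  rw [hz2, hz4]
  have keyC : ((‖riemannZeta (((4*σ:ℝ)) : ℂ)‖ : ℝ) : ℂ) *
      ((∏' p : Nat.Primes,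
          (1 - (2 / (((p:ℕ):ℝ) ^ σ + ((p:ℕ):ℝ) ^ (-σ))) *
            Real.cos (t * Real.log ((p:ℕ):ℝ)))⁻¹ : ℝ) : ℂ)
      = ((‖riemannZeta (((2*σ:ℝ)) : ℂ)‖ : ℝ) : ℂ) *
        ((‖riemannZeta ((σ:ℂ) + (t:ℂ) * I)‖ ^ 2 : ℝ) : ℂ) := by
    exact_mod_cast congrArg (fun x : ℝ => (x : ℂ)) key
  have hz2ne' : ((‖riemannZeta (((2*σ:ℝ)) : ℂ)‖ : ℝ) : ℂ) ≠ 0 := by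
    rw [← hz2]; exact hz2ne
  rw [div_mul_eq_mul_div, eq_div_iff hz2ne']
  linear_combination (-1 : ℂ) * keyC
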